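/- Let S be a nonempty finite set and let F = (f_s : I_s ⟶ [n])_{s∈S} be a compatible S-claw on [n] in the simplex category Δ. Then there exists an element m ∈ {0,…,n} that lies in the image of f_s for every s ∈ S. -/
import Mathlib


/-!
Formalization of statements from "Higher Segal spaces via higher excision" (T. Walde).
-/

open CategoryTheory CategoryTheory.Limits SimplexCategory

universe v u

namespace HigherSegal

set_option linter.unusedVariables false
set_option linter.unusedSectionVars false

/-- An `S`-claw `(f_s : I_s ⟶ x)_{s ∈ S}` in `Δ` is compatible if
(BC1) for each `i` there is at most one `s` such that the preimage `f_s⁻¹{i}` is not a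
singleton, and (BC2) for each pair `{i−1, i}` of consecutive elements there is at most
one `s` such that the pair is not contained in the image of `f_s`. -/
def CompatibleClaw {S : Type} {x : SimplexCategory} {I : S → SimplexCategory}
    (f : ∀ s : S, I s ⟶ x) : Prop :=
  (∀ i : Fin (x.len + 1), ∀ s t : S,
      ¬(∃! a, (f s).toOrderHom a = i) → ¬(∃! a, (f t).toOrderHom a = i) → s = t) ∧
  (∀ i : Fin x.len, ∀ s t : S,
      ¬(i.castSucc ∈ Set.range ⇑(f s).toOrderHom ∧ i.succ ∈ Set.range ⇑(f s).toOrderHom) →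
      ¬(i.castSucc ∈ Set.range ⇑(f t).toOrderHom ∧ i.succ ∈ Set.range ⇑(f t).toOrderHom) →
      s = t)

/-- An `S`-claw is cyclically compatible if it is compatible and all but at most one of
its morphisms contain both the minimal and the maximal element in their image. -/
def CyclicallyCompatibleClaw {S : Type} {x : SimplexCategory} {I : S → SimplexCategory}
    (f : ∀ s : S, I s ⟶ x) : Prop :=
  CompatibleClaw f ∧
  ∀ s t : S,
    ¬((0 : Fin (x.len + 1)) ∈ Set.range ⇑(f s).toOrderHom ∧
        Fin.last x.len ∈ Set.range ⇑(f s).toOrderHom) →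
    ¬((0 : Fin (x.len + 1)) ∈ Set.range ⇑(f t).toOrderHom ∧
        Fin.last x.len ∈ Set.range ⇑(f t).toOrderHom) →
    s = t


/-- For a nonempty finite `S`, every compatible `S`-claw on `[n]` in
`Δ` admits an element `m ∈ {0, …, n}` in the image of every one of its morphisms. -/
theorem compatibleClaw_common_image {S : Type} [Fintype S] [DecidableEq S] [Nonempty S]
    {n : ℕ} {I : S → SimplexCategory} (f : ∀ s : S, I s ⟶ SimplexCategory.mk n)
    (h : CompatibleClaw f) :
    ∃ m : Fin (n + 1), ∀ s : S, m ∈ Set.range ⇑(f s).toOrderHom := by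
  by_contra hc
  push_neg at hc
  choose g hg using hc
  have hconst : ∀ i : Fin (n + 1), g i = g 0 := by
    intro i
    induction i using Fin.induction with
    | zero => rfl
    | succ i ih =>
        have key := h.2 i (g i.castSucc) (g i.succ)
          (fun ⟨h1, _⟩ => hg i.castSucc h1)
          (fun ⟨_, h2⟩ => hg i.succ h2)
        rw [← key, ih]
  exact hg ((f (g 0)).toOrderHom 0)
    (by rw [hconst]; exact ⟨0, rfl⟩)

end HigherSegal
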